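/- Let g ∈ L²(ℝ³) and consider the integral system on C⁰(ℝ, L²(ℝ³) ⊕ L²(ℝ³)): u_θ(x) = u₀(x) exp(-i ∫₀^θ (A_g)_τ(x) dτ), α_θ(k) = α₀(k) - i g(k) ∫₀^θ F(|u_τ|²)(k) dτ, where (A_g)_τ(x) = ∫ (g(k) \overline{α_τ}(k) e^{-ik·x} + \overline{g}(k) α_τ(k) e^{ik·x}) dk and F(|u|²)(k) = ∫ e^{-ik·x} |u(x)|² dx. Then any solution with given initial data (u₀, α₀) ∈ L² ⊕ L² is unique: if (u_θ, α_θ) and (v_θ, β_θ) are two continuous solutions with the same initial data, then they coincide for all θ ∈ ℝ. -/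

import Mathlib

open MeasureTheory Complex

noncomputable section

local notation "ℝ³" => EuclideanSpace ℝ (Fin 3)

/-- The field `A_g(x)` associated to `g` and `α`. -/
def Afun (g α : ℝ³ → ℂ) (x : ℝ³) : ℂ :=
  ∫ k : ℝ³, g k * (starRingEnd ℂ) (α k) * Complex.exp (-Complex.I * ((inner ℝ k x : ℝ) : ℂ))
    + (starRingEnd ℂ) (g k) * α k * Complex.exp (Complex.I * ((inner ℝ k x : ℝ) : ℂ))

/-- `F(|u|²)(k) = ∫ e^{-ik·x} |u(x)|² dx`. -/
def Ffun (u : ℝ³ → ℂ) (k : ℝ³) : ℂ :=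
  ∫ x : ℝ³, Complex.exp (-Complex.I * ((inner ℝ k x : ℝ) : ℂ)) * ((‖u x‖ ^ 2 : ℝ) : ℂ)

/-- The integrand of `Afun`, hence `Afun` itself, is invariant under conjugation (it is real). -/
lemma Afun_conj (g α : ℝ³ → ℂ) (x : ℝ³) : (starRingEnd ℂ) (Afun g α x) = Afun g α x := by
  unfold Afun
  rw [← integral_conj]
  congr 1
  funext k
  simp only [map_add, map_mul, ← Complex.exp_conj, Complex.conj_conj, map_neg, Complex.conj_I,
    Complex.conj_ofReal, neg_neg, neg_mul]
  ring

lemma intervalIntegral_conj' (f : ℝ → ℂ) (a b : ℝ) :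
    (starRingEnd ℂ) (∫ τ in a..b, f τ) = ∫ τ in a..b, (starRingEnd ℂ) (f τ) := by
  simp [intervalIntegral, ← integral_conj]

/-- Since `Afun` is real-valued, the phase factor is unimodular. -/
lemma exp_int_Afun_norm (g : ℝ³ → ℂ) (α : ℝ → ℝ³ → ℂ) (x : ℝ³) (θ : ℝ) :
    ‖Complex.exp (-Complex.I * ∫ τ in (0 : ℝ)..θ, Afun g (α τ) x)‖ = 1 := by
  set z := ∫ τ in (0 : ℝ)..θ, Afun g (α τ) x with hzdef
  have hconj : (starRingEnd ℂ) z = z := by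
    rw [hzdef, intervalIntegral_conj']
    congr 1; funext τ; exact Afun_conj g (α τ) x
  have him : z.im = 0 := (Complex.conj_eq_iff_im).1 hconj
  rw [Complex.norm_exp]
  simp [Complex.mul_re, him]

/-- uniqueness of continuous `L² ⊕ L²`-valued solutions of the
integral system `u_θ = u₀ e^{-i∫₀^θ (A_g)_τ dτ}`, `α_θ = α₀ - i g ∫₀^θ F(|u_τ|²) dτ`:
two solutions with the same initial data coincide for all `θ`. -/
theorem stmt_5 (g : ℝ³ → ℂ) (hg : MeasureTheory.MemLp g 2 volume)
    (u v α β : ℝ → ℝ³ → ℂ)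
    (huL2 : ∀ θ, MeasureTheory.MemLp (u θ) 2 volume)
    (hvL2 : ∀ θ, MeasureTheory.MemLp (v θ) 2 volume)
    (hαL2 : ∀ θ, MeasureTheory.MemLp (α θ) 2 volume)
    (hβL2 : ∀ θ, MeasureTheory.MemLp (β θ) 2 volume)
    (hucont : ∀ θ₀ : ℝ, Filter.Tendsto
      (fun θ => eLpNorm (fun x => u θ x - u θ₀ x) 2 volume) (nhds θ₀) (nhds 0))
    (hvcont : ∀ θ₀ : ℝ, Filter.Tendsto
      (fun θ => eLpNorm (fun x => v θ x - v θ₀ x) 2 volume) (nhds θ₀) (nhds 0))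
    (hαcont : ∀ θ₀ : ℝ, Filter.Tendsto
      (fun θ => eLpNorm (fun k => α θ k - α θ₀ k) 2 volume) (nhds θ₀) (nhds 0))
    (hβcont : ∀ θ₀ : ℝ, Filter.Tendsto
      (fun θ => eLpNorm (fun k => β θ k - β θ₀ k) 2 volume) (nhds θ₀) (nhds 0))
    (hueq : ∀ θ x, u θ x
      = u 0 x * Complex.exp (-Complex.I * ∫ τ in (0 : ℝ)..θ, Afun g (α τ) x))
    (hαeq : ∀ θ k, α θ k
      = α 0 k - Complex.I * g k * ∫ τ in (0 : ℝ)..θ, Ffun (u τ) k)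
    (hveq : ∀ θ x, v θ x
      = v 0 x * Complex.exp (-Complex.I * ∫ τ in (0 : ℝ)..θ, Afun g (β τ) x))
    (hβeq : ∀ θ k, β θ k
      = β 0 k - Complex.I * g k * ∫ τ in (0 : ℝ)..θ, Ffun (v τ) k)
    (hinitu : ∀ x, u 0 x = v 0 x) (hinitα : ∀ k, α 0 k = β 0 k) :
    ∀ θ : ℝ, (∀ᵐ x : ℝ³ ∂volume, u θ x = v θ x) ∧ (∀ᵐ k : ℝ³ ∂volume, α θ k = β θ k) := by
  
  -- the phase is unimodular, so |u θ x| = |u 0 x| and |v θ x| = |v 0 x| for all θ, x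
  have hnu : ∀ θ x, ‖u θ x‖ = ‖u 0 x‖ := by
    intro θ x
    rw [hueq θ x, norm_mul, exp_int_Afun_norm, mul_one]
  have hnv : ∀ θ x, ‖v θ x‖ = ‖v 0 x‖ := by
    intro θ x
    rw [hveq θ x, norm_mul, exp_int_Afun_norm, mul_one]
  -- hence Ffun (u τ) = Ffun (v τ) pointwise
  have hF : ∀ τ k, Ffun (u τ) k = Ffun (v τ) k := by
    intro τ k
    unfold Ffun
    congr 1; funext x
    rw [hnu, hnv, hinitu]
  -- hence α θ = β θ pointwise
  have hαβ : ∀ θ k, α θ k = β θ k := by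
    intro θ k
    rw [hαeq θ k, hβeq θ k, hinitα k]
    congr 2
    exact intervalIntegral.integral_congr fun τ _ => hF τ k
  -- hence u θ = v θ pointwise
  have huv : ∀ θ x, u θ x = v θ x := by
    intro θ x
    rw [hueq θ x, hveq θ x, hinitu x]
    congr 3
    exact intervalIntegral.integral_congr fun τ _ => by
      congr 1; funext k; exact hαβ τ k
  exact fun θ => ⟨Filter.Eventually.of_forall (huv θ), Filter.Eventually.of_forall (hαβ θ)⟩
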